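/- Let H be a nonnegative self-adjoint operator on a Hilbert space 𝓗 and λ ≥ 0. If there exists a sequence {u_i} ⊂ dom(H) with ‖u_i‖ = 1, ⟨(H+1)^{−1}u_i, (H−λ)u_i⟩ → 0, ⟨u_i, (H−λ)u_i⟩ → 0, and u_i → 0 weakly, then λ belongs to the essential spectrum of H. -/

import Mathlib

open Filter Topology

variable {𝓗 : Type*} [NormedAddCommGroup 𝓗] [InnerProductSpace ℂ 𝓗] [CompleteSpace 𝓗]

/-- The essential spectrum of an operator: the spectrum with the isolated eigenvalues of
finite multiplicity removed. -/
def essSpectrum (H : 𝓗 →L[ℂ] 𝓗) : Set ℂ :=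
  spectrum ℂ H \
    {z | z ∈ spectrum ℂ H ∧ z ∉ closure (spectrum ℂ H \ {z}) ∧
      FiniteDimensional ℂ (Module.End.eigenspace (H : 𝓗 →ₗ[ℂ] 𝓗) z)}

set_option maxHeartbeats 1000000 in
/-- The classical Weyl criterion: a normalized weak-null sequence with `‖(H-λ)u_i‖ → 0`
forces `λ ∈ σ_ess(H)` for bounded self-adjoint `H`. -/
lemma weyl_mem_essSpectrum (H : 𝓗 →L[ℂ] 𝓗) (hH : IsSelfAdjoint H) (lam : ℝ)
    (u : ℕ → 𝓗) (hnorm : ∀ i, ‖u i‖ = 1)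
    (hHu : Tendsto (fun i => ‖H (u i) - (lam : ℂ) • u i‖) atTop (nhds 0))
    (hweak : ∀ v : 𝓗, Tendsto (fun i => (inner ℂ (u i) v : ℂ)) atTop (nhds 0)) :
    (lam : ℂ) ∈ essSpectrum H := by
  have hsymm := hH.isSymmetric
  -- Part A : lam is in the spectrum
  have hspec : (lam : ℂ) ∈ spectrum ℂ H := by
    by_contra hns
    rw [spectrum.notMem_iff] at hns
    obtain ⟨e, he⟩ := hns
    have hx : ∀ x : 𝓗, (↑e⁻¹ : 𝓗 →L[ℂ] 𝓗) ((↑e : 𝓗 →L[ℂ] 𝓗) x) = x := by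
      intro x
      have h1 : (↑e⁻¹ * ↑e : 𝓗 →L[ℂ] 𝓗) = 1 := e.inv_mul
      calc (↑e⁻¹ : 𝓗 →L[ℂ] 𝓗) ((↑e : 𝓗 →L[ℂ] 𝓗) x)
          = ((↑e⁻¹ * ↑e : 𝓗 →L[ℂ] 𝓗)) x := rfl
        _ = x := by rw [h1]; rfl
    have hb : ∀ i, (1:ℝ) ≤ ‖(↑e⁻¹ : 𝓗 →L[ℂ] 𝓗)‖ * ‖H (u i) - (lam:ℂ) • u i‖ := by
      intro i
      have h1' : (↑e : 𝓗 →L[ℂ] 𝓗) (u i) = (lam:ℂ) • u i - H (u i) := by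
        rw [he]
        simp [Algebra.algebraMap_eq_smul_one, ContinuousLinearMap.sub_apply]
      calc (1:ℝ) = ‖u i‖ := (hnorm i).symm
        _ = ‖(↑e⁻¹ : 𝓗 →L[ℂ] 𝓗) ((↑e : 𝓗 →L[ℂ] 𝓗) (u i))‖ := by rw [hx]
        _ ≤ ‖(↑e⁻¹ : 𝓗 →L[ℂ] 𝓗)‖ * ‖(↑e : 𝓗 →L[ℂ] 𝓗) (u i)‖ :=
            ContinuousLinearMap.le_opNorm _ _
        _ = ‖(↑e⁻¹ : 𝓗 →L[ℂ] 𝓗)‖ * ‖H (u i) - (lam:ℂ) • u i‖ := by rw [h1', norm_sub_rev]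
    have ht : Tendsto (fun i => ‖(↑e⁻¹ : 𝓗 →L[ℂ] 𝓗)‖ * ‖H (u i) - (lam:ℂ) • u i‖)
        atTop (nhds 0) := by
      simpa using hHu.const_mul ‖(↑e⁻¹ : 𝓗 →L[ℂ] 𝓗)‖
    obtain ⟨i, hi⟩ := (ht.eventually_lt_const (by norm_num : (0:ℝ) < 1)).exists
    exact absurd (hb i) (not_le.mpr hi)
  refine ⟨hspec, fun hmem => ?_⟩
  obtain ⟨-, hiso, hfin⟩ := hmem
  -- Part B : extract a gap around lam
  rw [Metric.mem_closure_iff] at hiso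
  push_neg at hiso
  obtain ⟨ε, hε, hsep⟩ := hiso
  have hsepR : ∀ x : ℝ, x ∈ spectrum ℝ H → x ≠ lam → ε ≤ |x - lam| := by
    intro x hx hne
    have hxC : (x:ℂ) ∈ spectrum ℂ H := hH.coe_mem_spectrum_complex.mpr hx
    have hxm : (x:ℂ) ∈ spectrum ℂ H \ {(lam:ℂ)} := by
      refine ⟨hxC, ?_⟩
      simp only [Set.mem_singleton_iff]
      exact fun h => hne (by exact_mod_cast h)
    have h1 := hsep (x:ℂ) hxm
    rw [dist_comm, dist_eq_norm] at h1
    have h2 : ((x : ℂ) - lam) = ((x - lam : ℝ) : ℂ) := by push_cast; ring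
    rw [h2, Complex.norm_real, Real.norm_eq_abs] at h1
    exact h1
  -- the bump function at lam
  set f : ℝ → ℝ := fun x => max 0 (1 - (2/ε) * |x - lam|) with hfdef
  have hfc : Continuous f := by
    apply continuous_const.max
    exact continuous_const.sub (continuous_const.mul (continuous_id.sub continuous_const).abs)
  have hf_lam : f lam = 1 := by simp [hfdef]
  have hf_spec : ∀ x ∈ spectrum ℝ H, x ≠ lam → f x = 0 := by
    intro x hx hne
    have h1 := hsepR x hx hne
    have h2 : (1:ℝ) - (2/ε) * |x - lam| ≤ 0 := by
      have h3 : 2 ≤ (2/ε) * |x - lam| := by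
        rw [div_mul_eq_mul_div, le_div_iff₀ hε]
        nlinarith [abs_nonneg (x - lam)]
      linarith
    simp [hfdef, max_eq_left h2]
  set g : ℝ → ℝ := fun x => (1 - f x) / (x - lam) with hgdef
  have hg_lam : g lam = 0 := by simp [hgdef, hf_lam]
  have hgc : ContinuousOn g (spectrum ℝ H) := by
    intro x hx
    by_cases hne : x = lam
    · subst hne
      have hev : g =ᶠ[nhdsWithin x (spectrum ℝ H)] (fun _ => (0:ℝ)) := by
        filter_upwards [nhdsWithin_le_nhds (Metric.ball_mem_nhds x hε), self_mem_nhdsWithin]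
          with y hy1 hy2
        by_cases hy : y = x
        · subst hy; exact hg_lam
        · exact absurd (hsepR y hy2 hy) (not_le.mpr (by simpa [Real.dist_eq] using hy1))
      exact (continuousWithinAt_const (b := (0:ℝ))).congr_of_eventuallyEq hev hg_lam
    · exact ContinuousWithinAt.div
        (continuous_const.sub hfc).continuousWithinAt
        (continuous_id.sub continuous_const).continuousWithinAt
        (sub_ne_zero.mpr hne)
  have hid : ContinuousOn (fun x : ℝ => x - lam) (spectrum ℝ H) :=
    (continuous_id.sub continuous_const).continuousOn
  set P := cfc f H with hPdef
  set G := cfc g H with hGdef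
  have hP_sa : IsSelfAdjoint P := cfc_predicate f H
  have hsub : cfc (fun x : ℝ => x - lam) H = H - algebraMap ℝ (𝓗 →L[ℂ] 𝓗) lam := by
    rw [cfc_sub (fun x : ℝ => x) (fun _ : ℝ => lam) H continuous_id.continuousOn
      continuousOn_const, cfc_id' ℝ H, cfc_const lam H]
  have key1 : (H - algebraMap ℝ (𝓗 →L[ℂ] 𝓗) lam) * P = 0 := by
    rw [← hsub, hPdef, ← cfc_mul _ _ H hid hfc.continuousOn]
    have h0 : cfc (fun x : ℝ => (x - lam) * f x) H = cfc (0 : ℝ → ℝ) H := by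
      apply cfc_congr
      intro x hx
      by_cases hne : x = lam
      · subst hne; simp
      · simp [hf_spec x hx hne]
    rw [h0, cfc_zero]
  have key2 : G * (H - algebraMap ℝ (𝓗 →L[ℂ] 𝓗) lam) = 1 - P := by
    rw [← hsub, hGdef, ← cfc_mul _ _ H hgc hid]
    have h0 : cfc (fun x : ℝ => g x * (x - lam)) H = cfc (fun x : ℝ => 1 - f x) H := by
      apply cfc_congr
      intro x hx
      by_cases hne : x = lam
      · subst hne; simp [hg_lam, hf_lam]
      · have hxne : x - lam ≠ 0 := sub_ne_zero.mpr hne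
        exact div_mul_cancel₀ (1 - f x) hxne
    rw [h0, cfc_sub (fun _ : ℝ => 1) f H continuousOn_const hfc.continuousOn,
      cfc_const 1 H, hPdef, map_one]
  have halg : ∀ v : 𝓗, (algebraMap ℝ (𝓗 →L[ℂ] 𝓗) lam) v = (lam:ℂ) • v := by
    intro v
    rw [Algebra.algebraMap_eq_smul_one]
    simp [Complex.coe_smul]
  -- the range of P lies in the eigenspace
  have hrange : ∀ v : 𝓗, P v ∈ Module.End.eigenspace (H : 𝓗 →ₗ[ℂ] 𝓗) (lam:ℂ) := by
    intro v
    rw [Module.End.mem_eigenspace_iff]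
    have h1 := congrArg (fun T : 𝓗 →L[ℂ] 𝓗 => T (P v)) key1
    simp only [ContinuousLinearMap.mul_apply, ContinuousLinearMap.sub_apply,
      ContinuousLinearMap.zero_apply] at h1
    have h2 : H (P (P v)) = (lam:ℂ) • (P (P v)) := by
      rw [← halg]; exact sub_eq_zero.mp h1
    -- also P ∘ P relates to P ... easier: apply key1 to v directly
    have h3 := congrArg (fun T : 𝓗 →L[ℂ] 𝓗 => T v) key1
    simp only [ContinuousLinearMap.mul_apply, ContinuousLinearMap.sub_apply,
      ContinuousLinearMap.zero_apply] at h3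
    have h4 : H (P v) = (lam:ℂ) • (P v) := by
      rw [← halg]; exact sub_eq_zero.mp h3
    simpa using h4
  haveI : FiniteDimensional ℂ (Module.End.eigenspace (H : 𝓗 →ₗ[ℂ] 𝓗) (lam:ℂ)) := hfin
  set E := Module.End.eigenspace (H : 𝓗 →ₗ[ℂ] 𝓗) (lam:ℂ) with hEdef
  let q : ℕ → E := fun i => ⟨P (u i), hrange (u i)⟩
  let b := stdOrthonormalBasis ℂ E
  have hinner0 : ∀ j, Tendsto (fun i => (inner ℂ (b j) (q i) : ℂ)) atTop (nhds 0) := by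
    intro j
    have h1 : ∀ i, (inner ℂ (b j) (q i) : ℂ) =
        starRingEnd ℂ (inner ℂ (u i) (P ((b j : E) : 𝓗))) := by
      intro i
      rw [Submodule.coe_inner, ← inner_conj_symm]
      congr 1
      exact hP_sa.isSymmetric _ _
    simp_rw [h1]
    have h2 := hweak (P ((b j : E) : 𝓗))
    have h3 : Tendsto (starRingEnd ℂ) (nhds 0) (nhds 0) := by
      simpa using Complex.continuous_conj.tendsto 0
    exact h3.comp h2
  have hPnorm : Tendsto (fun i => ‖P (u i)‖) atTop (nhds 0) := by
    have hnq : ∀ i, ‖P (u i)‖ = ‖q i‖ := fun i => rfl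
    have hrepr : ∀ i, ‖q i‖ = Real.sqrt (∑ j, ‖(inner ℂ (b j) (q i) : ℂ)‖^2) := by
      intro i
      rw [← b.repr.norm_map (q i), EuclideanSpace.norm_eq]
      congr 1
      refine Finset.sum_congr rfl fun j _ => ?_
      rw [b.repr_apply_apply]
    have hsum : Tendsto (fun i => ∑ j, ‖(inner ℂ (b j) (q i) : ℂ)‖^2) atTop (nhds 0) := by
      have h5 : ∀ j, Tendsto (fun i => ‖(inner ℂ (b j) (q i) : ℂ)‖^2) atTop (nhds 0) := by
        intro j
        simpa using ((hinner0 j).norm.pow 2)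
      simpa using tendsto_finset_sum Finset.univ (fun j _ => h5 j)
    have h6 := hsum.sqrt
    rw [Real.sqrt_zero] at h6
    simp_rw [hnq, hrepr]
    exact h6
  -- the complementary part tends to zero in norm
  have hdiff : Tendsto (fun i => ‖u i - P (u i)‖) atTop (nhds 0) := by
    have happ : ∀ i, u i - P (u i) = G (H (u i) - (lam:ℂ) • u i) := by
      intro i
      have h1 := congrArg (fun T : 𝓗 →L[ℂ] 𝓗 => T (u i)) key2
      simp only [ContinuousLinearMap.mul_apply, ContinuousLinearMap.sub_apply,
        ContinuousLinearMap.one_apply] at h1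
      rw [halg] at h1
      exact h1.symm
    refine squeeze_zero (g := fun i => ‖G‖ * ‖H (u i) - (lam:ℂ) • u i‖)
      (fun i => norm_nonneg _) (fun i => ?_) ?_
    · rw [happ i]; exact G.le_opNorm _
    · simpa using hHu.const_mul ‖G‖
  have hsum2 : Tendsto (fun i => ‖u i - P (u i)‖ + ‖P (u i)‖) atTop (nhds 0) := by
    simpa using hdiff.add hPnorm
  obtain ⟨i, hi⟩ := (hsum2.eventually_lt_const (by norm_num : (0:ℝ) < 1)).exists
  have hge : (1:ℝ) ≤ ‖u i - P (u i)‖ + ‖P (u i)‖ := by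
    calc (1:ℝ) = ‖u i‖ := (hnorm i).symm
      _ = ‖(u i - P (u i)) + P (u i)‖ := by rw [sub_add_cancel]
      _ ≤ ‖u i - P (u i)‖ + ‖P (u i)‖ := norm_add_le _ _
  linarith

/-- generalized Weyl criterion, Charalambous–Lu. For a nonnegative
self-adjoint `H` with resolvent `Res = (H+1)⁻¹` and `λ ≥ 0`: a normalized weak-null sequence
with `⟨(H+1)⁻¹u_i,(H-λ)u_i⟩ → 0` and `⟨u_i,(H-λ)u_i⟩ → 0` forces `λ ∈ σ_ess(H)`. -/
theorem stmt8 (H Res : 𝓗 →L[ℂ] 𝓗) (hH : IsSelfAdjoint H)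
    (hnonneg : ∀ x : 𝓗, 0 ≤ (inner ℂ x (H x) : ℂ).re)
    (hRes : ∀ x : 𝓗, Res (H x + x) = x ∧ H (Res x) + Res x = x)
    (lam : ℝ) (hlam : 0 ≤ lam)
    (u : ℕ → 𝓗) (hnorm : ∀ i, ‖u i‖ = 1)
    (h1 : Tendsto (fun i => (inner ℂ (Res (u i)) (H (u i) - (lam : ℂ) • u i) : ℂ))
      atTop (nhds 0))
    (h2 : Tendsto (fun i => (inner ℂ (u i) (H (u i) - (lam : ℂ) • u i) : ℂ))
      atTop (nhds 0))
    (hweak : ∀ v : 𝓗, Tendsto (fun i => (inner ℂ (u i) v : ℂ)) atTop (nhds 0)) :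
    (lam : ℂ) ∈ essSpectrum H := by
  set c : ℂ := 1 + (lam : ℂ) with hcdef
  set v : ℕ → 𝓗 := fun i => H (u i) - (lam : ℂ) • u i with hvdef
  set w : ℕ → 𝓗 := fun i => u i - c • Res (u i) with hwdef
  have hw_eq : ∀ i, H (w i) + w i = v i := by
    intro i
    have h := (hRes (u i)).2
    have hHRes : H (Res (u i)) = u i - Res (u i) := eq_sub_of_add_eq h
    simp only [hwdef, hvdef, map_sub, map_smul, hHRes, hcdef]
    module
  have hinnerwv : Tendsto (fun i => (inner ℂ (w i) (v i) : ℂ)) atTop (nhds 0) := by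
    have heq : ∀ i, (inner ℂ (w i) (v i) : ℂ) =
        inner ℂ (u i) (v i) - (starRingEnd ℂ c) * inner ℂ (Res (u i)) (v i) := by
      intro i
      rw [hwdef]
      simp [inner_sub_left, inner_smul_left]
      ring
    simp_rw [heq]
    rw [show (0:ℂ) = 0 - starRingEnd ℂ c * 0 by simp]
    exact h2.sub (h1.const_mul (starRingEnd ℂ c))
  have hbound : ∀ i, ‖w i‖^2 ≤ (inner ℂ (w i) (v i) : ℂ).re := by
    intro i
    have h3 : (inner ℂ (w i) (v i) : ℂ) = inner ℂ (w i) (H (w i)) + inner ℂ (w i) (w i) := by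
      rw [← hw_eq i, inner_add_right]
    rw [h3]
    have h4 : ((inner ℂ (w i) (w i) : ℂ)).re = ‖w i‖^2 := by
      rw [inner_self_eq_norm_sq_to_K]; norm_cast
    have h5 := hnonneg (w i)
    simp only [Complex.add_re]
    linarith
  have hwsq : Tendsto (fun i => ‖w i‖^2) atTop (nhds 0) := by
    have hre : Tendsto (fun i => (inner ℂ (w i) (v i) : ℂ).re) atTop (nhds 0) := by
      simpa [Function.comp_def] using (Complex.continuous_re.tendsto 0).comp hinnerwv
    exact squeeze_zero (fun i => sq_nonneg _) hbound hre
  have hw0 : Tendsto (fun i => ‖w i‖) atTop (nhds 0) := by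
    have h6 := hwsq.sqrt
    rw [Real.sqrt_zero] at h6
    have : ∀ i, Real.sqrt (‖w i‖^2) = ‖w i‖ := fun i => Real.sqrt_sq (norm_nonneg _)
    simpa [this] using h6
  have hv0 : Tendsto (fun i => ‖v i‖) atTop (nhds 0) := by
    refine squeeze_zero (g := fun i => (‖H‖ + 1) * ‖w i‖)
      (fun i => norm_nonneg _) (fun i => ?_) ?_
    · rw [← hw_eq i]
      calc ‖H (w i) + w i‖ ≤ ‖H (w i)‖ + ‖w i‖ := norm_add_le _ _
        _ ≤ ‖H‖ * ‖w i‖ + 1 * ‖w i‖ := by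
            have := H.le_opNorm (w i)
            nlinarith [norm_nonneg (w i)]
        _ = (‖H‖ + 1) * ‖w i‖ := by ring
    · simpa using hw0.const_mul (‖H‖ + 1)
  exact weyl_mem_essSpectrum H hH lam u hnorm hv0 hweak
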